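/- arXiv:1705.04825 — 3 statements merged into one kernel-verified Lean document; each statement's English description precedes it below -/
import Mathlib

section
/- For positive definite matrices X, A and t ≥ 0, ‖log(X #_t A)‖ ≤ (1 + t)‖log X‖ + t‖log A‖, where ‖·‖ is the operator norm. -/
open MeasureTheory
open scoped ComplexOrder

abbrev Mat (m : ℕ) := Matrix (Fin m) (Fin m) ℂ

noncomputable instance {m : ℕ} : MeasurableSpace (Mat m) := borel _
instance {m : ℕ} : BorelSpace (Mat m) := ⟨rfl⟩

/-- Functional calculus on Hermitian matrices (junk value `A` otherwise). -/
noncomputable def matFun {m : ℕ} (f : ℝ → ℝ) (A : Mat m) : Mat m :=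
  if h : A.IsHermitian then
    (h.eigenvectorUnitary : Mat m) *
      Matrix.diagonal (fun i => (f (h.eigenvalues i) : ℂ)) *
      star (h.eigenvectorUnitary : Mat m)
  else A

/-- Real power `A^t` of a positive definite matrix, via the spectral decomposition. -/
noncomputable def mpow {m : ℕ} (A : Mat m) (t : ℝ) : Mat m := matFun (fun x => x ^ t) A

/-- Logarithm of a positive definite matrix, via the spectral decomposition. -/
noncomputable def mlog {m : ℕ} (A : Mat m) : Mat m := matFun Real.log A

/-- The operator norm of a matrix (acting on the Euclidean space). -/
noncomputable def opN {m : ℕ} (A : Mat m) : ℝ :=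
  ‖(Matrix.toEuclideanCLM (𝕜 := ℂ) A : EuclideanSpace ℂ (Fin m) →L[ℂ] EuclideanSpace ℂ (Fin m))‖

/-- The Frobenius (Hilbert-Schmidt) norm of a matrix. -/
noncomputable def fnorm {m : ℕ} (A : Mat m) : ℝ :=
  Real.sqrt (∑ i, ∑ j, ‖A i j‖ ^ 2)

/-- The Riemannian trace metric distance `d(A,B) = ‖log (A^{-1/2} B A^{-1/2})‖₂`. -/
noncomputable def rdist {m : ℕ} (A B : Mat m) : ℝ :=
  fnorm (mlog (mpow A (-(1/2 : ℝ)) * B * mpow A (-(1/2 : ℝ))))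

/-- The `t`-weighted geometric mean `X #_t A = X^{1/2} (X^{-1/2} A X^{-1/2})^t X^{1/2}`. -/
noncomputable def geom {m : ℕ} (X : Mat m) (t : ℝ) (A : Mat m) : Mat m :=
  mpow X (1/2 : ℝ) * mpow (mpow X (-(1/2 : ℝ)) * A * mpow X (-(1/2 : ℝ))) t * mpow X (1/2 : ℝ)

/-- Finite first moment for a measure on positive definite matrices. -/
def HasFFM {m : ℕ} (μ : Measure (Mat m)) : Prop :=
  ∃ Y : Mat m, Y.PosDef ∧ Integrable (fun A => rdist A Y) μ

/-- Couplings of two probability measures. -/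
def couplings {m : ℕ} (μ ν : Measure (Mat m)) : Set (Measure (Mat m × Mat m)) :=
  {π | IsProbabilityMeasure π ∧ π.map Prod.fst = μ ∧ π.map Prod.snd = ν}

/-- The 1-Wasserstein distance with respect to the Riemannian trace metric. -/
noncomputable def W1 {m : ℕ} (μ ν : Measure (Mat m)) : ℝ :=
  sInf ((fun π : Measure (Mat m × Mat m) => ∫ p, rdist p.1 p.2 ∂π) '' couplings μ ν)


section AuxStmt3
open Matrix
open scoped Matrix.Norms.L2Operator

variable {m : ℕ}

lemma norm_one_le' : ‖(1 : Mat m)‖ ≤ 1 := by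
  rw [Matrix.cstar_norm_def, _root_.map_one]
  exact ContinuousLinearMap.norm_id_le

lemma norm_unitary_le (U : Matrix.unitaryGroup (Fin m) ℂ) : ‖(U : Mat m)‖ ≤ 1 := by
  have h := Matrix.l2_opNorm_conjTranspose_mul_self (U : Mat m)
  rw [← Matrix.star_eq_conjTranspose, Matrix.UnitaryGroup.star_mul_self] at h
  nlinarith [norm_nonneg (U : Mat m), norm_one_le' (m := m)]

lemma norm_diagonal_le {d : Fin m → ℂ} {c : ℝ} (hc : 0 ≤ c) (h : ∀ i, ‖d i‖ ≤ c) :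
    ‖(Matrix.diagonal d : Mat m)‖ ≤ c := by
  rw [Matrix.l2_opNorm_def]
  refine ContinuousLinearMap.opNorm_le_bound _ hc fun x => ?_
  have hrw : ((Matrix.toEuclideanLin.trans LinearMap.toContinuousLinearMap)
      (Matrix.diagonal d)) x = (EuclideanSpace.equiv (Fin m) ℂ).symm (Matrix.diagonal d *ᵥ x) := rfl
  rw [hrw, EuclideanSpace.norm_eq, EuclideanSpace.norm_eq]
  have h1 : ∀ i, ‖((EuclideanSpace.equiv (Fin m) ℂ).symm (Matrix.diagonal d *ᵥ x)) i‖ ^ 2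
      ≤ c ^ 2 * ‖x i‖ ^ 2 := by
    intro i
    have : ((EuclideanSpace.equiv (Fin m) ℂ).symm (Matrix.diagonal d *ᵥ x)) i = d i * x i := by
      simp [Matrix.mulVec_diagonal]
    rw [this, norm_mul, mul_pow]
    gcongr
    exact h i
  calc Real.sqrt (∑ i, ‖((EuclideanSpace.equiv (Fin m) ℂ).symm (Matrix.diagonal d *ᵥ x)) i‖ ^ 2)
      ≤ Real.sqrt (∑ i, c ^ 2 * ‖x i‖ ^ 2) := Real.sqrt_le_sqrt (Finset.sum_le_sum fun i _ => h1 i)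
    _ = c * Real.sqrt (∑ i, ‖x i‖ ^ 2) := by
        rw [← Finset.mul_sum, Real.sqrt_mul (sq_nonneg c), Real.sqrt_sq hc]

lemma norm_conj_diag_le (U : Matrix.unitaryGroup (Fin m) ℂ) {d : Fin m → ℂ} {c : ℝ}
    (hc : 0 ≤ c) (h : ∀ i, ‖d i‖ ≤ c) :
    ‖(U : Mat m) * Matrix.diagonal d * star (U : Mat m)‖ ≤ c := by
  have h1 : ‖(U : Mat m) * Matrix.diagonal d * star (U : Mat m)‖
      ≤ ‖(U : Mat m)‖ * ‖(Matrix.diagonal d : Mat m)‖ * ‖star (U : Mat m)‖ := by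
    calc ‖(U : Mat m) * Matrix.diagonal d * star (U : Mat m)‖
        ≤ ‖(U : Mat m) * Matrix.diagonal d‖ * ‖star (U : Mat m)‖ := Matrix.l2_opNorm_mul _ _
      _ ≤ ‖(U : Mat m)‖ * ‖(Matrix.diagonal d : Mat m)‖ * ‖star (U : Mat m)‖ := by
          gcongr; exact Matrix.l2_opNorm_mul _ _
  have h2 : ‖star (U : Mat m)‖ ≤ 1 := by
    rw [Matrix.star_eq_conjTranspose, Matrix.l2_opNorm_conjTranspose]
    exact norm_unitary_le U
  have h3 := norm_unitary_le U
  have h4 := norm_diagonal_le hc h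
  calc ‖(U : Mat m) * Matrix.diagonal d * star (U : Mat m)‖
      ≤ ‖(U : Mat m)‖ * ‖(Matrix.diagonal d : Mat m)‖ * ‖star (U : Mat m)‖ := h1
    _ ≤ 1 * c * 1 :=
        mul_le_mul (mul_le_mul h3 h4 (norm_nonneg _) zero_le_one) h2 (norm_nonneg _)
          (by simpa using hc)
    _ = c := by ring

lemma matFun_eq {A : Mat m} (hA : A.IsHermitian) (f : ℝ → ℝ) :
    matFun f A = (hA.eigenvectorUnitary : Mat m) *
      Matrix.diagonal (fun i => (f (hA.eigenvalues i) : ℂ)) *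
      star (hA.eigenvectorUnitary : Mat m) := by
  rw [matFun, dif_pos hA]

lemma matFun_isHermitian {A : Mat m} (hA : A.IsHermitian) (f : ℝ → ℝ) :
    (matFun f A).IsHermitian := by
  rw [matFun_eq hA f]
  have hD : (Matrix.diagonal (fun i => (f (hA.eigenvalues i) : ℂ))).IsHermitian := by
    rw [Matrix.IsHermitian, Matrix.diagonal_conjTranspose]
    have : (star fun i => ((f (hA.eigenvalues i) : ℂ))) = fun i => ((f (hA.eigenvalues i) : ℂ)) := by
      funext i
      exact Complex.conj_ofReal _
    rw [this]
  have := Matrix.isHermitian_mul_mul_conjTranspose (hA.eigenvectorUnitary : Mat m) hD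
  simpa [Matrix.star_eq_conjTranspose] using this

lemma matFun_mulVec {A : Mat m} (hA : A.IsHermitian) (f : ℝ → ℝ) (i : Fin m) :
    matFun f A *ᵥ ⇑(hA.eigenvectorBasis i) =
      (f (hA.eigenvalues i) : ℂ) • ⇑(hA.eigenvectorBasis i) := by
  rw [matFun_eq hA f, ← Matrix.mulVec_mulVec, ← Matrix.mulVec_mulVec,
    hA.star_eigenvectorUnitary_mulVec, Matrix.diagonal_mulVec_single]
  have : (Pi.single i ((f (hA.eigenvalues i) : ℂ) * 1) : Fin m → ℂ)
      = (f (hA.eigenvalues i) : ℂ) • (Pi.single i 1 : Fin m → ℂ) := by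
    rw [mul_one, ← Pi.single_smul, smul_eq_mul, mul_one]
  rw [this, Matrix.mulVec_smul, hA.eigenvectorUnitary_mulVec]

lemma norm_matFun_le {A : Mat m} (hA : A.IsHermitian) {f : ℝ → ℝ} {c : ℝ} (hc : 0 ≤ c)
    (h : ∀ i, |f (hA.eigenvalues i)| ≤ c) : ‖matFun f A‖ ≤ c := by
  rw [matFun_eq hA f]
  refine norm_conj_diag_le _ hc fun i => ?_
  simpa [Complex.norm_real, Real.norm_eq_abs] using h i

lemma norm_hermitian_le {A : Mat m} (hA : A.IsHermitian) {c : ℝ} (hc : 0 ≤ c)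
    (h : ∀ i, |hA.eigenvalues i| ≤ c) : ‖A‖ ≤ c := by
  conv_lhs => rw [hA.spectral_theorem]
  refine norm_conj_diag_le _ hc fun i => ?_
  simpa [Complex.norm_real, Real.norm_eq_abs] using h i

/-- abstract: eigen-type vector inequality -/
lemma abs_le_norm_of_mulVec {P : Mat m} {lam : ℝ} {v : EuclideanSpace ℂ (Fin m)}
    (hv : ‖v‖ = 1) (hPv : P *ᵥ ⇑v = (lam : ℂ) • ⇑v) : |lam| ≤ ‖P‖ := by
  have h := Matrix.l2_opNorm_mulVec P v
  rw [hv, mul_one] at h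
  have h2 : (EuclideanSpace.equiv (Fin m) ℂ).symm (P *ᵥ v) = (lam : ℂ) • v := by
    apply (EuclideanSpace.equiv (Fin m) ℂ).injective
    exact (LinearEquiv.apply_symm_apply _ _).trans hPv
  rw [h2, norm_smul, hv, mul_one, Complex.norm_real, Real.norm_eq_abs] at h
  exact h

lemma abs_f_le_norm_matFun {A : Mat m} (hA : A.IsHermitian) (f : ℝ → ℝ) (i : Fin m) :
    |f (hA.eigenvalues i)| ≤ ‖matFun f A‖ :=
  abs_le_norm_of_mulVec (hA.eigenvectorBasis.orthonormal.1 i) (matFun_mulVec hA f i)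

lemma abs_eig_le_norm {A : Mat m} (hA : A.IsHermitian) (i : Fin m) :
    |hA.eigenvalues i| ≤ ‖A‖ :=
  abs_le_norm_of_mulVec (hA.eigenvectorBasis.orthonormal.1 i) (hA.mulVec_eigenvectorBasis i)

lemma one_le_abs_eig_mul_norm {A B : Mat m} (hA : A.IsHermitian) (hAB : A * B = 1) (i : Fin m) :
    1 ≤ |hA.eigenvalues i| * ‖B‖ := by
  set v : EuclideanSpace ℂ (Fin m) := hA.eigenvectorBasis i with hv
  have hv1 : ‖v‖ = 1 := hA.eigenvectorBasis.orthonormal.1 i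
  have hBA : B * A = 1 := mul_eq_one_comm.mp hAB
  have h1 : B *ᵥ (A *ᵥ ⇑v) = ⇑v := by
    rw [Matrix.mulVec_mulVec, hBA, Matrix.one_mulVec]
  rw [hA.mulVec_eigenvectorBasis, Matrix.mulVec_smul] at h1
  have h2 : (EuclideanSpace.equiv (Fin m) ℂ).symm ((hA.eigenvalues i : ℂ) • (B *ᵥ ⇑v)) = v := by
    apply (EuclideanSpace.equiv (Fin m) ℂ).injective
    exact (LinearEquiv.apply_symm_apply _ _).trans h1
  have h3 := congrArg norm h2
  rw [hv1] at h3
  have h4 : ‖(EuclideanSpace.equiv (Fin m) ℂ).symm ((hA.eigenvalues i : ℂ) • (B *ᵥ ⇑v))‖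
      = |hA.eigenvalues i| * ‖(EuclideanSpace.equiv (Fin m) ℂ).symm (B *ᵥ ⇑v)‖ := by
    rw [show (EuclideanSpace.equiv (Fin m) ℂ).symm ((hA.eigenvalues i : ℂ) • (B *ᵥ ⇑v))
        = (hA.eigenvalues i : ℂ) • (EuclideanSpace.equiv (Fin m) ℂ).symm (B *ᵥ ⇑v) from rfl,
      norm_smul, Complex.norm_real, Real.norm_eq_abs]
  rw [h4] at h3
  have h5 := Matrix.l2_opNorm_mulVec B v
  rw [hv1, mul_one] at h5
  calc (1 : ℝ) = |hA.eigenvalues i| * ‖(EuclideanSpace.equiv (Fin m) ℂ).symm (B *ᵥ ⇑v)‖ := h3.symm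
    _ ≤ |hA.eigenvalues i| * ‖B‖ := by
        apply mul_le_mul_of_nonneg_left _ (abs_nonneg _)
        exact h5

lemma matFun_mul_matFun {A : Mat m} (hA : A.IsHermitian) (f g : ℝ → ℝ)
    (h : ∀ i, f (hA.eigenvalues i) * g (hA.eigenvalues i) = 1) :
    matFun f A * matFun g A = 1 := by
  rw [matFun_eq hA f, matFun_eq hA g]
  have hU : star (hA.eigenvectorUnitary : Mat m) * (hA.eigenvectorUnitary : Mat m) = 1 :=
    Matrix.UnitaryGroup.star_mul_self _
  have hU' : (hA.eigenvectorUnitary : Mat m) * star (hA.eigenvectorUnitary : Mat m) = 1 :=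
    mul_eq_one_comm.mp hU
  calc (hA.eigenvectorUnitary : Mat m) * Matrix.diagonal (fun i => (f (hA.eigenvalues i) : ℂ)) *
        star (hA.eigenvectorUnitary : Mat m) *
        ((hA.eigenvectorUnitary : Mat m) * Matrix.diagonal (fun i => (g (hA.eigenvalues i) : ℂ)) *
        star (hA.eigenvectorUnitary : Mat m))
      = (hA.eigenvectorUnitary : Mat m) * (Matrix.diagonal (fun i => (f (hA.eigenvalues i) : ℂ)) *
        ((star (hA.eigenvectorUnitary : Mat m) * (hA.eigenvectorUnitary : Mat m)) *
        (Matrix.diagonal (fun i => (g (hA.eigenvalues i) : ℂ)) *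
        star (hA.eigenvectorUnitary : Mat m)))) := by
        simp only [Matrix.mul_assoc]
    _ = (hA.eigenvectorUnitary : Mat m) * (Matrix.diagonal (fun i => (f (hA.eigenvalues i) : ℂ)) *
        (Matrix.diagonal (fun i => (g (hA.eigenvalues i) : ℂ)) *
        star (hA.eigenvectorUnitary : Mat m))) := by rw [hU, one_mul]
    _ = (hA.eigenvectorUnitary : Mat m) *
        ((Matrix.diagonal (fun i => (f (hA.eigenvalues i) : ℂ)) *
          Matrix.diagonal (fun i => (g (hA.eigenvalues i) : ℂ))) *
        star (hA.eigenvectorUnitary : Mat m)) := by rw [Matrix.mul_assoc]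
    _ = 1 := by
        rw [Matrix.diagonal_mul_diagonal]
        have : (fun i => (f (hA.eigenvalues i) : ℂ) * (g (hA.eigenvalues i) : ℂ))
            = fun _ => (1 : ℂ) := by
          funext i
          rw [← Complex.ofReal_mul, h i, Complex.ofReal_one]
        rw [this, Matrix.diagonal_one, one_mul, hU']

lemma mul_matFun_self {A : Mat m} (hA : A.IsHermitian) (f : ℝ → ℝ)
    (h : ∀ i, hA.eigenvalues i * f (hA.eigenvalues i) = 1) :
    A * matFun f A = 1 := by
  have hid : A = matFun id A := by
    rw [matFun_eq hA id]
    exact hA.spectral_theorem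
  nth_rewrite 1 [hid]
  exact matFun_mul_matFun hA id f h

lemma posDef_conj {B C : Mat m} (hB : B.PosDef) (hC : ∀ x : Fin m → ℂ, C *ᵥ x = 0 → x = 0) :
    (Cᴴ * B * C).PosDef := by
  refine Matrix.PosDef.of_dotProduct_mulVec_pos (Matrix.isHermitian_conjTranspose_mul_mul C hB.1) fun x hx => ?_
  have hCx : C *ᵥ x ≠ 0 := fun h => hx (hC x h)
  simpa only [Matrix.star_mulVec, Matrix.dotProduct_mulVec, Matrix.vecMul_vecMul]
    using hB.dotProduct_mulVec_pos hCx

lemma mulVec_inj_of_mul_eq_one {C D : Mat m} (h : C * D = 1) :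
    ∀ x : Fin m → ℂ, C *ᵥ x = 0 → x = 0 := by
  intro x hx
  have h2 : (D * C) *ᵥ x = D *ᵥ (C *ᵥ x) := (Matrix.mulVec_mulVec x D C).symm
  rwa [mul_eq_one_comm.mp h, Matrix.one_mulVec, hx, Matrix.mulVec_zero] at h2

lemma matFun_posDef {A : Mat m} (hA : A.PosDef) {f : ℝ → ℝ}
    (hf : ∀ i, 0 < f (hA.1.eigenvalues i)) : (matFun f A).PosDef := by
  rw [matFun_eq hA.1 f]
  have hD : (Matrix.diagonal (fun i => (f (hA.1.eigenvalues i) : ℂ))).PosDef := by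
    rw [Matrix.posDef_diagonal_iff]
    intro i
    exact_mod_cast hf i
  have hU : (hA.1.eigenvectorUnitary : Mat m) * star (hA.1.eigenvectorUnitary : Mat m) = 1 :=
    mul_eq_one_comm.mp (Matrix.UnitaryGroup.star_mul_self _)
  have hinj := mulVec_inj_of_mul_eq_one
    (mul_eq_one_comm.mp hU)
  have := posDef_conj (C := star (hA.1.eigenvectorUnitary : Mat m)) hD hinj
  have hcc : (star (hA.1.eigenvectorUnitary : Mat m))ᴴ = (hA.1.eigenvectorUnitary : Mat m) := by
    rw [Matrix.star_eq_conjTranspose, Matrix.conjTranspose_conjTranspose]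
  rwa [hcc] at this

lemma norm_triple_le {P Q R : Mat m} {p q r : ℝ} (hP : ‖P‖ ≤ p) (hQ : ‖Q‖ ≤ q) (hR : ‖R‖ ≤ r)
    (hq : 0 ≤ q) (hr : 0 ≤ r) : ‖P * Q * R‖ ≤ p * q * r := by
  calc ‖P * Q * R‖ ≤ ‖P * Q‖ * ‖R‖ := Matrix.l2_opNorm_mul _ _
    _ ≤ (‖P‖ * ‖Q‖) * ‖R‖ :=
        mul_le_mul_of_nonneg_right (Matrix.l2_opNorm_mul _ _) (norm_nonneg _)
    _ ≤ p * q * r :=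
        mul_le_mul (mul_le_mul hP hQ (norm_nonneg _) ((norm_nonneg P).trans hP)) hR
          (norm_nonneg _) (mul_nonneg ((norm_nonneg P).trans hP) hq)

lemma norm_mpow_le' {A : Mat m} (hA : A.PosDef) {c : ℝ}
    (h : ∀ i, |Real.log (hA.1.eigenvalues i)| ≤ c) (s : ℝ) :
    ‖matFun (fun x => x ^ s) A‖ ≤ Real.exp (|s| * c) := by
  refine norm_matFun_le hA.1 (Real.exp_nonneg _) fun i => ?_
  have hl := hA.eigenvalues_pos i
  rw [Real.rpow_def_of_pos hl, abs_of_pos (Real.exp_pos _), Real.exp_le_exp]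
  calc Real.log (hA.1.eigenvalues i) * s ≤ |Real.log (hA.1.eigenvalues i) * s| := le_abs_self _
    _ = |s| * |Real.log (hA.1.eigenvalues i)| := by rw [abs_mul, mul_comm]
    _ ≤ |s| * c := mul_le_mul_of_nonneg_left (h i) (abs_nonneg _)

lemma abs_log_eig_le {P Q : Mat m} (hP : P.PosDef) (hPQ : P * Q = 1) {c : ℝ}
    (hnP : ‖P‖ ≤ Real.exp c) (hnQ : ‖Q‖ ≤ Real.exp c) (i : Fin m) :
    |Real.log (hP.1.eigenvalues i)| ≤ c := by
  set lam := hP.1.eigenvalues i with hlam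
  have hl : 0 < lam := hP.eigenvalues_pos i
  have h1 : lam ≤ Real.exp c := by
    have := abs_eig_le_norm hP.1 i
    rw [abs_of_pos hl] at this
    exact this.trans hnP
  have h2 : 1 ≤ lam * Real.exp c := by
    have h3 := one_le_abs_eig_mul_norm hP.1 hPQ i
    rw [abs_of_pos hl] at h3
    exact h3.trans (mul_le_mul_of_nonneg_left hnQ hl.le)
  have h4 : Real.exp (-c) ≤ lam := by
    have key : Real.exp (-c) * (lam * Real.exp c) = lam := by
      rw [Real.exp_neg]
      field_simp
    nlinarith [Real.exp_pos (-c), mul_le_mul_of_nonneg_left h2 (Real.exp_pos (-c)).le]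
  rw [abs_le]
  constructor
  · exact (Real.le_log_iff_exp_le hl).mpr h4
  · exact (Real.log_le_iff_le_exp hl).mpr h1

/-- `‖log (X #_t A)‖ ≤ (1+t)‖log X‖ + t‖log A‖` for positive definite `X, A` and `t ≥ 0`. -/
theorem stmt3 {m : ℕ} (X A : Mat m) (hX : X.PosDef) (hA : A.PosDef) (t : ℝ) (ht : 0 ≤ t) :
    opN (mlog (geom X t A)) ≤ (1 + t) * opN (mlog X) + t * opN (mlog A) := by
  have hopN : ∀ B : Mat m, opN B = ‖B‖ := fun _ => rfl
  set a := opN (mlog X) with ha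
  set b := opN (mlog A) with hb
  have ha0 : 0 ≤ a := by rw [ha, hopN]; exact norm_nonneg _
  have hb0 : 0 ≤ b := by rw [hb, hopN]; exact norm_nonneg _
  -- eigen log bounds
  have heX : ∀ i, |Real.log (hX.1.eigenvalues i)| ≤ a := fun i => by
    rw [ha, hopN]; exact abs_f_le_norm_matFun hX.1 Real.log i
  have heA : ∀ i, |Real.log (hA.1.eigenvalues i)| ≤ b := fun i => by
    rw [hb, hopN]; exact abs_f_le_norm_matFun hA.1 Real.log i
  set Xp := mpow X (1/2 : ℝ) with hXpdef
  set Xm := mpow X (-(1/2 : ℝ)) with hXmdef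
  have hXpXm : Xp * Xm = 1 := matFun_mul_matFun hX.1 _ _ (fun i => by
    rw [← Real.rpow_add (hX.eigenvalues_pos i)]; norm_num)
  have hXmXp : Xm * Xp = 1 := mul_eq_one_comm.mp hXpXm
  have hXp_herm : Xp.IsHermitian := matFun_isHermitian hX.1 _
  have hXm_herm : Xm.IsHermitian := matFun_isHermitian hX.1 _
  set M := Xm * A * Xm with hMdef
  have hM : M.PosDef := by
    have := posDef_conj (C := Xm) hA (mulVec_inj_of_mul_eq_one hXmXp)
    rwa [hXm_herm.eq] at this
  set Ainv := mpow A (-1 : ℝ) with hAinvdef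
  have hAAinv : A * Ainv = 1 := mul_matFun_self hA.1 _ (fun i => by
    rw [Real.rpow_neg_one]; exact mul_inv_cancel₀ (hA.eigenvalues_pos i).ne')
  set N := Xp * Ainv * Xp with hNdef
  have hMN : M * N = 1 := by
    have h1 : M * N = Xm * (A * ((Xm * Xp) * (Ainv * Xp))) := by
      rw [hMdef, hNdef]; simp only [Matrix.mul_assoc]
    rw [h1, hXmXp, one_mul, ← Matrix.mul_assoc A Ainv Xp, hAAinv, one_mul, hXmXp]
  -- norm bounds
  have hnXp : ‖Xp‖ ≤ Real.exp (1 / 2 * a) := by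
    have := norm_mpow_le' hX heX (1 / 2)
    rwa [show |(1 / 2 : ℝ)| = 1 / 2 by norm_num] at this
  have hnXm : ‖Xm‖ ≤ Real.exp (1 / 2 * a) := by
    have := norm_mpow_le' hX heX (-(1 / 2))
    rwa [show |(-(1 / 2) : ℝ)| = 1 / 2 by norm_num] at this
  have hnA : ‖A‖ ≤ Real.exp b := norm_hermitian_le hA.1 (Real.exp_nonneg _) fun i => by
    rw [abs_of_pos (hA.eigenvalues_pos i)]
    exact (Real.log_le_iff_le_exp (hA.eigenvalues_pos i)).mp (abs_le.mp (heA i)).2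
  have hnAinv : ‖Ainv‖ ≤ Real.exp b := by
    have := norm_mpow_le' hA heA (-1)
    rwa [show |(-1 : ℝ)| = 1 by norm_num, one_mul] at this
  have hnM : ‖M‖ ≤ Real.exp (a + b) := by
    have h := norm_triple_le hnXm hnA hnXm (Real.exp_nonneg _) (Real.exp_nonneg _)
    calc ‖M‖ ≤ Real.exp (1 / 2 * a) * Real.exp b * Real.exp (1 / 2 * a) := h
      _ = Real.exp (a + b) := by rw [← Real.exp_add, ← Real.exp_add]; congr 1; ring
  have hnN : ‖N‖ ≤ Real.exp (a + b) := by
    have h := norm_triple_le hnXp hnAinv hnXp (Real.exp_nonneg _) (Real.exp_nonneg _)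
    calc ‖N‖ ≤ Real.exp (1 / 2 * a) * Real.exp b * Real.exp (1 / 2 * a) := h
      _ = Real.exp (a + b) := by rw [← Real.exp_add, ← Real.exp_add]; congr 1; ring
  have heM : ∀ i, |Real.log (hM.1.eigenvalues i)| ≤ a + b :=
    fun i => abs_log_eig_le hM hMN hnM hnN i
  -- powers of M
  set Mt := mpow M t with hMtdef
  set Mnt := mpow M (-t) with hMntdef
  have hMt : Mt.PosDef :=
    matFun_posDef hM (fun i => Real.rpow_pos_of_pos (hM.eigenvalues_pos i) t)
  have hMtMnt : Mt * Mnt = 1 := matFun_mul_matFun hM.1 _ _ (fun i => by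
    rw [← Real.rpow_add (hM.eigenvalues_pos i)]; simp)
  have hnMt : ‖Mt‖ ≤ Real.exp (t * (a + b)) := by
    have := norm_mpow_le' hM heM t
    rwa [abs_of_nonneg ht] at this
  have hnMnt : ‖Mnt‖ ≤ Real.exp (t * (a + b)) := by
    have := norm_mpow_le' hM heM (-t)
    rwa [abs_neg, abs_of_nonneg ht] at this
  -- the geometric mean
  have hGdef : geom X t A = Xp * Mt * Xp := rfl
  set G := Xp * Mt * Xp with hGdef2
  set H := Xm * Mnt * Xm with hHdef
  have hG : G.PosDef := by
    have := posDef_conj (C := Xp) hMt (mulVec_inj_of_mul_eq_one hXpXm)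
    rwa [hXp_herm.eq] at this
  have hGH : G * H = 1 := by
    have h1 : G * H = Xp * (Mt * ((Xp * Xm) * (Mnt * Xm))) := by
      rw [hGdef2, hHdef]; simp only [Matrix.mul_assoc]
    rw [h1, hXpXm, one_mul, ← Matrix.mul_assoc Mt Mnt Xm, hMtMnt, one_mul, hXpXm]
  set c := (1 + t) * a + t * b with hc
  have hc0 : 0 ≤ c := by
    rw [hc]
    have h1 : (0:ℝ) ≤ 1 + t := by linarith
    nlinarith
  have hnG : ‖G‖ ≤ Real.exp c := by
    have h := norm_triple_le hnXp hnMt hnXp (Real.exp_nonneg _) (Real.exp_nonneg _)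
    calc ‖G‖ ≤ Real.exp (1 / 2 * a) * Real.exp (t * (a + b)) * Real.exp (1 / 2 * a) := h
      _ = Real.exp c := by rw [← Real.exp_add, ← Real.exp_add]; congr 1; rw [hc]; ring
  have hnH : ‖H‖ ≤ Real.exp c := by
    have h := norm_triple_le hnXm hnMnt hnXm (Real.exp_nonneg _) (Real.exp_nonneg _)
    calc ‖H‖ ≤ Real.exp (1 / 2 * a) * Real.exp (t * (a + b)) * Real.exp (1 / 2 * a) := h
      _ = Real.exp c := by rw [← Real.exp_add, ← Real.exp_add]; congr 1; rw [hc]; ring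
  have heG : ∀ i, |Real.log (hG.1.eigenvalues i)| ≤ c :=
    fun i => abs_log_eig_le hG hGH hnG hnH i
  calc opN (mlog (geom X t A)) = ‖matFun Real.log G‖ := by rw [hopN, hGdef]; rfl
    _ ≤ c := norm_matFun_le hG.1 hc0 heG

end AuxStmt3
end

section
/- For positive definite matrices X, A, B and t ∈ [0,1], the Riemannian trace distance satisfies d(X #_{-t} A, X #_{-t} B) = d(X #_t A, X #_t B). -/
open MeasureTheory
open scoped ComplexOrder

section aux
variable {m : ℕ}

lemma contOn_spectrum (A : Mat m) (f : ℝ → ℝ) : ContinuousOn f (spectrum ℝ A) := by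
  rw [continuousOn_iff_continuous_restrict]
  have : Finite (spectrum ℝ A) := A.finite_real_spectrum
  exact continuous_of_discreteTopology

lemma matFun_eq_cfc {A : Mat m} (hA : A.IsHermitian) (f : ℝ → ℝ) :
    matFun f A = cfc f A := by
  rw [matFun, dif_pos hA, hA.cfc_eq]
  rfl

lemma spec_pos {A : Mat m} (hA : A.PosDef) : ∀ x ∈ spectrum ℝ A, 0 < x := by
  intro x hx
  rw [hA.isHermitian.spectrum_real_eq_range_eigenvalues] at hx
  obtain ⟨i, rfl⟩ := hx
  exact hA.eigenvalues_pos i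

lemma mpow_eq_cfc {A : Mat m} (hA : A.IsHermitian) (t : ℝ) :
    mpow A t = cfc (fun x : ℝ => x ^ t) A := matFun_eq_cfc hA _

lemma mlog_eq_cfc {A : Mat m} (hA : A.IsHermitian) :
    mlog A = cfc Real.log A := matFun_eq_cfc hA _

lemma mpow_isHermitian {A : Mat m} (hA : A.IsHermitian) (t : ℝ) :
    (mpow A t).IsHermitian := by
  rw [mpow_eq_cfc hA]
  exact cfc_predicate _ A

lemma mpow_mul_mpow {A : Mat m} (hA : A.PosDef) (s t : ℝ) :
    mpow A s * mpow A t = mpow A (s + t) := by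
  rw [mpow_eq_cfc hA.isHermitian, mpow_eq_cfc hA.isHermitian, mpow_eq_cfc hA.isHermitian,
    ← cfc_mul _ _ A (contOn_spectrum A _) (contOn_spectrum A _)]
  exact cfc_congr fun x hx => (Real.rpow_add (spec_pos hA x hx) s t).symm

lemma mpow_zero {A : Mat m} (hA : A.IsHermitian) : mpow A 0 = 1 := by
  rw [mpow_eq_cfc hA]
  have : cfc (fun x : ℝ => x ^ (0:ℝ)) A = cfc (fun _ : ℝ => (1:ℝ)) A :=
    cfc_congr fun x _ => Real.rpow_zero x
  rw [this, cfc_const 1 A hA.isSelfAdjoint, map_one]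

lemma mpow_one {A : Mat m} (hA : A.IsHermitian) : mpow A 1 = A := by
  rw [mpow_eq_cfc hA]
  have : cfc (fun x : ℝ => x ^ (1:ℝ)) A = cfc (id : ℝ → ℝ) A :=
    cfc_congr fun x _ => Real.rpow_one x
  rw [this, cfc_id ℝ A hA.isSelfAdjoint]

end aux

section aux2
open Matrix
variable {m : ℕ}

/-- Congruence `N * P * star N` preserves positive definiteness, given a left inverse of `star N`. -/
lemma posDef_conj_s6 {N P L : Mat m} (hP : P.PosDef) (hL : L * star N = 1) :
    (N * P * star N).PosDef := by
  rw [Matrix.posDef_iff_dotProduct_mulVec]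
  constructor
  · have : (N * P * star N)ᴴ = N * P * star N := by
      simp [Matrix.conjTranspose_mul, Matrix.star_eq_conjTranspose, Matrix.mul_assoc,
        hP.isHermitian.eq]
    exact this
  · intro x hx
    have hx' : star N *ᵥ x ≠ 0 := by
      intro h
      apply hx
      have : (L * star N) *ᵥ x = L *ᵥ (star N *ᵥ x) := by rw [Matrix.mulVec_mulVec]
      rw [hL, h, Matrix.mulVec_zero, Matrix.one_mulVec] at this
      exact this
    have h1 : star (star N *ᵥ x) = star x ᵥ* N := by
      rw [Matrix.star_mulVec, Matrix.star_eq_conjTranspose, Matrix.conjTranspose_conjTranspose]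
    have key : star x ⬝ᵥ (N * P * star N) *ᵥ x
        = star (star N *ᵥ x) ⬝ᵥ P *ᵥ (star N *ᵥ x) := by
      rw [h1, ← Matrix.mulVec_mulVec, ← Matrix.mulVec_mulVec, Matrix.dotProduct_mulVec]
    rw [key]
    exact hP.dotProduct_mulVec_pos hx'

end aux2

section aux3
open Matrix
variable {m : ℕ}

lemma mpow_posDef {A : Mat m} (hA : A.PosDef) (t : ℝ) : (mpow A t).PosDef := by
  rw [mpow, matFun, dif_pos hA.isHermitian]
  refine posDef_conj_s6 (L := (hA.isHermitian.eigenvectorUnitary : Mat m)) ?_ ?_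
  · refine Matrix.PosDef.diagonal fun i => ?_
    have h0 := Real.rpow_pos_of_pos (hA.eigenvalues_pos i) t
    exact_mod_cast h0
  · exact Unitary.mul_star_self_of_mem (SetLike.coe_mem _)

lemma mpow_cancel {A : Mat m} (hA : A.PosDef) (s : ℝ) : mpow A (-s) * mpow A s = 1 := by
  rw [mpow_mul_mpow hA, neg_add_cancel, mpow_zero hA.isHermitian]

lemma mpow_cancel' {A : Mat m} (hA : A.PosDef) (s : ℝ) : mpow A s * mpow A (-s) = 1 := by
  rw [mpow_mul_mpow hA, add_neg_cancel, mpow_zero hA.isHermitian]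

lemma mpow_inv {A : Mat m} (hA : A.PosDef) (s : ℝ) : (mpow A s)⁻¹ = mpow A (-s) :=
  Matrix.inv_eq_left_inv (mpow_cancel hA s)

lemma inv_eq_mpow {A : Mat m} (hA : A.PosDef) : A⁻¹ = mpow A (-1) :=
  Matrix.inv_eq_left_inv (by
    calc mpow A (-1) * A = mpow A (-1) * mpow A 1 := by rw [mpow_one hA.isHermitian]
    _ = 1 := mpow_cancel hA 1)

lemma star_mpow {A : Mat m} (hA : A.PosDef) (s : ℝ) : star (mpow A s) = mpow A s :=
  (mpow_isHermitian hA.isHermitian s).eq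

lemma fnorm_eq_trace (M : Mat m) : fnorm M = Real.sqrt ((Matrix.trace (Mᴴ * M)).re) := by
  unfold fnorm
  congr 1
  rw [Matrix.trace]
  simp only [Matrix.diag_apply, Matrix.mul_apply, Matrix.conjTranspose_apply]
  rw [Complex.re_sum]
  rw [Finset.sum_comm]
  congr 1; ext i
  rw [Complex.re_sum]
  congr 1; ext j
  have h : star (M j i) * M j i = (Complex.normSq (M j i) : ℂ) := by
    rw [mul_comm]; exact Complex.mul_conj _
  rw [h, Complex.ofReal_re, Complex.normSq_eq_norm_sq]

lemma fnorm_neg (M : Mat m) : fnorm (-M) = fnorm M := by simp [fnorm]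

lemma fnorm_conj {V M : Mat m} (h1 : V * star V = 1) (h2 : star V * V = 1) :
    fnorm (V * M * star V) = fnorm M := by
  rw [fnorm_eq_trace, fnorm_eq_trace]
  congr 2
  have hH : (V * M * star V)ᴴ = V * Mᴴ * star V := by
    simp [Matrix.conjTranspose_mul, Matrix.star_eq_conjTranspose, Matrix.mul_assoc]
  rw [hH]
  have : V * Mᴴ * star V * (V * M * star V) = V * (Mᴴ * M) * star V := by
    simp only [Matrix.mul_assoc]
    rw [← Matrix.mul_assoc (star V) V, h2, Matrix.one_mul]
  rw [this, Matrix.trace_mul_cycle, ← Matrix.mul_assoc, h2, Matrix.one_mul]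

end aux3

section aux4
open Matrix
variable {m : ℕ}

/-- Conjugation by a unitary matrix as a star algebra homomorphism. -/
noncomputable def conjSAH (V : Mat m) (h1 : V * star V = 1) (h2 : star V * V = 1) :
    Mat m →⋆ₐ[ℂ] Mat m where
  toFun Y := V * Y * star V
  map_one' := by show V * 1 * star V = 1; rw [Matrix.mul_one, h1]
  map_mul' a b := by
    simp only [Matrix.mul_assoc]
    rw [← Matrix.mul_assoc (star V) V, h2, Matrix.one_mul]
  map_zero' := by simp
  map_add' a b := by
    simp [Matrix.mul_add, Matrix.add_mul]
  commutes' c := by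
    simp only [Algebra.algebraMap_eq_smul_one]
    rw [Matrix.mul_smul, Matrix.mul_one, Matrix.smul_mul, h1]
  map_star' Y := by
    simp [Matrix.star_eq_conjTranspose, Matrix.conjTranspose_mul, Matrix.mul_assoc]

lemma conjSAH_continuous (V : Mat m) (h1 : V * star V = 1) (h2 : star V * V = 1) :
    Continuous (conjSAH V h1 h2) := by
  show Continuous fun Y : Mat m => V * Y * star V
  exact (continuous_const.matrix_mul continuous_id).matrix_mul continuous_const

lemma mlog_conj {V W : Mat m} (h1 : V * star V = 1) (h2 : star V * V = 1)
    (hW : W.IsHermitian) :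
    mlog (V * W * star V) = V * mlog W * star V := by
  have hsa : IsSelfAdjoint W := hW.isSelfAdjoint
  have hφa : IsSelfAdjoint (conjSAH V h1 h2 W) := by
    have := map_star (conjSAH V h1 h2) W
    rw [hsa.star_eq] at this
    exact this.symm
  have key := StarAlgHom.map_cfc (conjSAH V h1 h2) Real.log W
    (contOn_spectrum W _) (conjSAH_continuous V h1 h2) hsa hφa
  have hherm : (V * W * star V).IsHermitian := hφa
  rw [mlog_eq_cfc hherm, mlog_eq_cfc hW]
  exact key.symm

lemma contOn_finite (f : ℝ → ℝ) {s : Set ℝ} (hs : s.Finite) : ContinuousOn f s := by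
  rw [continuousOn_iff_continuous_restrict]
  have := hs.to_subtype
  exact continuous_of_discreteTopology

lemma mlog_inv {S : Mat m} (hS : S.PosDef) : mlog S⁻¹ = - mlog S := by
  rw [inv_eq_mpow hS, mpow_eq_cfc hS.isHermitian, mlog_eq_cfc hS.isHermitian]
  have hherm : (cfc (fun x : ℝ => x ^ (-1:ℝ)) S).IsHermitian := cfc_predicate _ S
  rw [mlog_eq_cfc hherm]
  rw [← cfc_comp' Real.log (fun x : ℝ => x ^ (-1:ℝ)) S
    (contOn_finite _ ((Matrix.finite_real_spectrum (A := S)).image _)) (contOn_spectrum S _)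
    hS.isHermitian.isSelfAdjoint]
  rw [← cfc_neg Real.log S]
  refine cfc_congr fun x hx => ?_
  have hxpos := spec_pos hS x hx
  rw [Real.rpow_neg_one, Real.log_inv]

end aux4

section aux5
open Matrix
variable {m : ℕ}

lemma rdist_congr_inv {X P Q : Mat m} (hX : X.PosDef) (hP : P.PosDef) (hQ : Q.PosDef) :
    rdist (X * P⁻¹ * X) (X * Q⁻¹ * X) = rdist P Q := by
  have hXh := hX.isHermitian
  have sX : star X = X := by rw [Matrix.star_eq_conjTranspose, hXh.eq]
  set H := mpow P (-(1/2:ℝ)) with hH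
  set K := mpow P ((1/2:ℝ)) with hK
  have sH : star H = H := star_mpow hP _
  have eKH : K * H = 1 := mpow_cancel' hP (1/2)
  have eHK : H * K = 1 := mpow_cancel hP (1/2)
  have hPinv : P⁻¹.PosDef := hP.inv
  have hP' : (X * P⁻¹ * X).PosDef := by
    have := posDef_conj_s6 (N := X) (L := mpow X (-1)) hPinv (by
      rw [sX]
      calc mpow X (-1) * X = mpow X (-1) * mpow X 1 := by rw [mpow_one hXh]
      _ = 1 := mpow_cancel hX 1)
    rwa [sX] at this
  set P' := X * P⁻¹ * X with hP'def
  set H' := mpow P' (-(1/2:ℝ)) with hH'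
  have sH' : star H' = H' := star_mpow hP' _
  have eH'P'H' : H' * P' * H' = 1 := by
    have e1 : H' * P' = mpow P' (1/2) := by
      calc H' * P' = mpow P' (-(1/2:ℝ)) * mpow P' 1 := by rw [mpow_one hP'.isHermitian]
      _ = mpow P' (-(1/2) + 1) := mpow_mul_mpow hP' _ _
      _ = mpow P' (1/2) := by norm_num
    rw [e1]; exact mpow_cancel' hP' (1/2)
  set V := H' * X * H with hV
  have sV : star V = H * X * H' := by
    rw [hV, StarMul.star_mul, StarMul.star_mul, sH, sH', sX, Matrix.mul_assoc]
  have hHH : H * H = P⁻¹ := by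
    rw [inv_eq_mpow hP, hH]
    calc mpow P (-(1/2:ℝ)) * mpow P (-(1/2:ℝ)) = mpow P (-(1/2) + -(1/2)) := mpow_mul_mpow hP _ _
    _ = mpow P (-1) := by norm_num
  have hVV : V * star V = 1 := by
    rw [sV, hV]
    calc H' * X * H * (H * X * H') = H' * ((X * (H * H)) * X) * H' := by
          simp only [Matrix.mul_assoc]
    _ = H' * P' * H' := by rw [hHH]
    _ = 1 := eH'P'H'
  have hV'V : star V * V = 1 := mul_eq_one_comm.mp hVV
  set S := H * Q * H with hS_def
  have hS : S.PosDef := by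
    have := posDef_conj_s6 (N := H) (L := K) hQ (by rw [sH]; exact eKH)
    rwa [sH] at this
  have hKQK : S⁻¹ = K * Q⁻¹ * K := by
    rw [hS_def, Matrix.mul_inv_rev, Matrix.mul_inv_rev]
    have hHinv : H⁻¹ = K := Matrix.inv_eq_left_inv eKH
    rw [hHinv, ← Matrix.mul_assoc]
  have cancel1 : ∀ Z : Mat m, H * (K * Z) = Z := fun Z => by
    rw [← Matrix.mul_assoc, eHK, Matrix.one_mul]
  have cancel2 : ∀ Z : Mat m, K * (H * Z) = Z := fun Z => by
    rw [← Matrix.mul_assoc, eKH, Matrix.one_mul]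
  have key : H' * (X * Q⁻¹ * X) * H' = V * S⁻¹ * star V := by
    rw [hKQK, sV, hV]
    simp only [Matrix.mul_assoc]
    rw [cancel1, cancel2]
  have hSinvH : (S⁻¹).IsHermitian := by
    rw [inv_eq_mpow hS]; exact mpow_isHermitian hS.isHermitian _
  show fnorm (mlog (H' * (X * Q⁻¹ * X) * H')) = fnorm (mlog (H * Q * H))
  rw [key, mlog_conj hVV hV'V hSinvH, mlog_inv hS, Matrix.mul_neg, Matrix.neg_mul,
    fnorm_neg, fnorm_conj hVV hV'V]

end aux5

/-- `d(X #_{-t} A, X #_{-t} B) = d(X #_t A, X #_t B)` for `t ∈ [0,1]`. -/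
theorem stmt6 {m : ℕ} (X A B : Mat m) (hX : X.PosDef) (hA : A.PosDef) (hB : B.PosDef)
    (t : ℝ) (ht : t ∈ Set.Icc (0:ℝ) 1) :
    rdist (geom X (-t) A) (geom X (-t) B) = rdist (geom X t A) (geom X t B) := by
  have hXh := hX.isHermitian
  set N := mpow X (-(1/2:ℝ)) with hN
  set M := mpow X ((1/2:ℝ)) with hM
  have sN : star N = N := star_mpow hX _
  have sM : star M = M := star_mpow hX _
  have eMN : M * N = 1 := mpow_cancel' hX (1/2)
  have eNM : N * M = 1 := mpow_cancel hX (1/2)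
  set C := N * A * N with hC_def
  set D := N * B * N with hD_def
  have hC : C.PosDef := by
    have := posDef_conj_s6 (N := N) (L := M) hA (by rw [sN]; exact eMN)
    rwa [sN] at this
  have hD : D.PosDef := by
    have := posDef_conj_s6 (N := N) (L := M) hB (by rw [sN]; exact eMN)
    rwa [sN] at this
  have hPA : (geom X t A).PosDef := by
    show (M * mpow C t * M).PosDef
    have := posDef_conj_s6 (N := M) (L := N) (mpow_posDef hC t) (by rw [sM]; exact eNM)
    rwa [sM] at this
  have hPB : (geom X t B).PosDef := by
    show (M * mpow D t * M).PosDef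
    have := posDef_conj_s6 (N := M) (L := N) (mpow_posDef hD t) (by rw [sM]; exact eNM)
    rwa [sM] at this
  have hXN : X * N = M := by
    rw [hN, hM]
    calc X * mpow X (-(1/2:ℝ)) = mpow X 1 * mpow X (-(1/2:ℝ)) := by rw [mpow_one hXh]
    _ = mpow X (1 + -(1/2)) := mpow_mul_mpow hX _ _
    _ = mpow X ((1/2:ℝ)) := by norm_num
  have hNX : N * X = M := by
    rw [hN, hM]
    calc mpow X (-(1/2:ℝ)) * X = mpow X (-(1/2:ℝ)) * mpow X 1 := by rw [mpow_one hXh]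
    _ = mpow X (-(1/2) + 1) := mpow_mul_mpow hX _ _
    _ = mpow X ((1/2:ℝ)) := by norm_num
  have claimA : geom X (-t) A = X * (geom X t A)⁻¹ * X := by
    show M * mpow C (-t) * M = X * (M * mpow C t * M)⁻¹ * X
    rw [Matrix.mul_inv_rev, Matrix.mul_inv_rev, Matrix.inv_eq_left_inv eNM, mpow_inv hC]
    simp only [← Matrix.mul_assoc]
    rw [hXN]
    simp only [Matrix.mul_assoc]
    rw [hNX]
  have claimB : geom X (-t) B = X * (geom X t B)⁻¹ * X := by
    show M * mpow D (-t) * M = X * (M * mpow D t * M)⁻¹ * X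
    rw [Matrix.mul_inv_rev, Matrix.mul_inv_rev, Matrix.inv_eq_left_inv eNM, mpow_inv hD]
    simp only [← Matrix.mul_assoc]
    rw [hXN]
    simp only [Matrix.mul_assoc]
    rw [hNX]
  rw [claimA, claimB]
  exact rdist_congr_inv hX hPA hPB
end

section
/- For a fixed positive definite X and probability measure μ with finite first moment, the map t ↦ X #_t μ from ℝ to the 1-Wasserstein space is locally Lipschitz: for every T > 0 there is C_T > 0 with d₁^W(X #_t μ, X #_s μ) ≤ C_T|t−s| for all t, s ∈ [−T, T]. -/
open MeasureTheory
open scoped ComplexOrder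

namespace Aux
open Matrix Polynomial
variable {m : ℕ} {A : Mat m}

lemma star_mul_self (hA : A.IsHermitian) :
    star (hA.eigenvectorUnitary : Mat m) * (hA.eigenvectorUnitary : Mat m) = 1 :=
  Matrix.mem_unitaryGroup_iff'.mp hA.eigenvectorUnitary.2

lemma mul_star_self (hA : A.IsHermitian) :
    (hA.eigenvectorUnitary : Mat m) * star (hA.eigenvectorUnitary : Mat m) = 1 :=
  Matrix.mem_unitaryGroup_iff.mp hA.eigenvectorUnitary.2

lemma matFun_def (hA : A.IsHermitian) (f : ℝ → ℝ) :
    matFun f A = (hA.eigenvectorUnitary : Mat m) *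
      Matrix.diagonal (fun i => (f (hA.eigenvalues i) : ℂ)) *
      star (hA.eigenvectorUnitary : Mat m) := dif_pos hA

lemma matFun_herm (hA : A.IsHermitian) (f : ℝ → ℝ) : (matFun f A).IsHermitian := by
  rw [matFun_def hA f]
  show _ᴴ = _
  rw [← Matrix.star_eq_conjTranspose]
  simp only [StarMul.star_mul, star_star, mul_assoc]
  congr 2
  rw [Matrix.star_eq_conjTranspose, Matrix.diagonal_conjTranspose]
  have : (star fun i => (f (hA.eigenvalues i) : ℂ)) = fun i => (f (hA.eigenvalues i) : ℂ) := by
    funext i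
    simp [Pi.star_apply, Complex.conj_ofReal]
  rw [this]

lemma matFun_congr (hA : A.IsHermitian) {f g : ℝ → ℝ}
    (h : ∀ i, f (hA.eigenvalues i) = g (hA.eigenvalues i)) : matFun f A = matFun g A := by
  rw [matFun_def hA f, matFun_def hA g]
  have : (fun i => (f (hA.eigenvalues i) : ℂ)) = fun i => (g (hA.eigenvalues i) : ℂ) :=
    funext fun i => by rw [h i]
  rw [this]

lemma matFun_mul (hA : A.IsHermitian) (f g : ℝ → ℝ) :
    matFun f A * matFun g A = matFun (fun x => f x * g x) A := by
  rw [matFun_def hA f, matFun_def hA g, matFun_def hA]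
  simp only [← mul_assoc]
  rw [show (hA.eigenvectorUnitary : Mat m) *
      Matrix.diagonal (fun i => (f (hA.eigenvalues i) : ℂ)) *
      star (hA.eigenvectorUnitary : Mat m) * (hA.eigenvectorUnitary : Mat m)
      = (hA.eigenvectorUnitary : Mat m) *
      Matrix.diagonal (fun i => (f (hA.eigenvalues i) : ℂ)) by
    rw [mul_assoc, star_mul_self hA, mul_one]]
  rw [mul_assoc _ _ (Matrix.diagonal _), Matrix.diagonal_mul_diagonal]
  push_cast
  rfl


lemma matrix_isUnit {B : Mat m} (h : A * B = 1) : IsUnit A :=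
  ⟨⟨A, B, h, mul_eq_one_comm.mp h⟩, rfl⟩

lemma posDef_conj {S : Mat m} (hA : A.PosDef) (hS : IsUnit S) : (Sᴴ * A * S).PosDef := by
  rw [Matrix.posDef_iff_dotProduct_mulVec]
  constructor
  · show _ᴴ = _
    rw [Matrix.conjTranspose_mul, Matrix.conjTranspose_mul, Matrix.conjTranspose_conjTranspose,
      hA.1.eq, ← mul_assoc]
  · intro x hx
    have hdet : IsUnit S.det := (Matrix.isUnit_iff_isUnit_det S).mp hS
    have hSx : S *ᵥ x ≠ 0 := by
      intro h
      apply hx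
      have := congrArg (fun v => S⁻¹ *ᵥ v) h
      simpa [Matrix.mulVec_mulVec, Matrix.nonsing_inv_mul S hdet] using this
    have key : dotProduct (star x) ((Sᴴ * A * S) *ᵥ x)
        = dotProduct (star (S *ᵥ x)) (A *ᵥ (S *ᵥ x)) := by
      rw [← Matrix.mulVec_mulVec, ← Matrix.mulVec_mulVec, Matrix.dotProduct_mulVec (star x),
        ← Matrix.star_mulVec]
    rw [key]
    exact hA.dotProduct_mulVec_pos hSx

lemma matFun_posDef (hA : A.IsHermitian) {f : ℝ → ℝ} (hf : ∀ i, 0 < f (hA.eigenvalues i)) :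
    (matFun f A).PosDef := by
  rw [matFun_def hA f]
  have hD : (Matrix.diagonal fun i => (f (hA.eigenvalues i) : ℂ)).PosDef :=
    Matrix.PosDef.diagonal fun i => by
      exact Complex.zero_lt_real.mpr (hf i)
  have hU : IsUnit (star (hA.eigenvectorUnitary : Mat m)) :=
    matrix_isUnit (star_mul_self hA)
  have := posDef_conj hD hU
  rwa [Matrix.star_eq_conjTranspose, Matrix.conjTranspose_conjTranspose] at this

lemma mpow_herm (hA : A.IsHermitian) (t : ℝ) : (mpow A t).IsHermitian := matFun_herm hA _

lemma mpow_posDef (hA : A.PosDef) (t : ℝ) : (mpow A t).PosDef :=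
  matFun_posDef hA.1 fun i => Real.rpow_pos_of_pos (hA.eigenvalues_pos i) t

lemma mpow_mul (hA : A.PosDef) (a b : ℝ) : mpow A a * mpow A b = mpow A (a + b) := by
  rw [mpow, mpow, mpow, matFun_mul hA.1]
  exact matFun_congr hA.1 fun i => (Real.rpow_add (hA.eigenvalues_pos i) a b).symm

lemma mpow_zero (hA : A.IsHermitian) : mpow A 0 = 1 := by
  rw [mpow, show matFun (fun x : ℝ => x ^ (0:ℝ)) A = matFun (fun _ => 1) A from
    matFun_congr hA fun i => Real.rpow_zero _]
  rw [matFun_def hA]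
  simp [mul_star_self hA]

lemma mpow_one (hA : A.IsHermitian) : mpow A 1 = A := by
  rw [mpow, show matFun (fun x : ℝ => x ^ (1:ℝ)) A = matFun (fun x => x) A from
    matFun_congr hA fun i => Real.rpow_one _]
  rw [matFun_def hA]
  exact hA.spectral_theorem.symm

lemma mpow_inv_mul (hA : A.PosDef) (t : ℝ) : mpow A t * mpow A (-t) = 1 := by
  rw [mpow_mul hA, add_neg_cancel, mpow_zero hA.1]

lemma mpow_isUnit (hA : A.PosDef) (t : ℝ) : IsUnit (mpow A t) :=
  matrix_isUnit (mpow_inv_mul hA t)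


lemma charpoly_conj {S N S' : Mat m} (h1 : S * S' = 1) :
    (S * N * S').charpoly = N.charpoly := by
  have h2 : S' * S = 1 := mul_eq_one_comm.mp h1
  set F : Mat m →+* Matrix (Fin m) (Fin m) (Polynomial ℂ) :=
    (Polynomial.C : ℂ →+* Polynomial ℂ).mapMatrix with hF
  have hcomm : ∀ M : Mat m, Commute (Matrix.scalar (Fin m) (X : Polynomial ℂ)) (F M) :=
    fun M => Matrix.scalar_commute _ (fun r' => Commute.all _ _) _
  have hc : Matrix.charmatrix (S * N * S') = F S * Matrix.charmatrix N * F S' := by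
    rw [Matrix.charmatrix, Matrix.charmatrix, _root_.map_mul F, _root_.map_mul F, Matrix.mul_sub,
      Matrix.sub_mul]
    congr 1
    rw [← (hcomm S).eq, mul_assoc, ← _root_.map_mul F, h1, _root_.map_one F, mul_one]
  rw [Matrix.charpoly, Matrix.charpoly, hc, Matrix.det_mul, Matrix.det_mul]
  have : (F S).det * (F S').det = 1 := by
    rw [← Matrix.det_mul, ← _root_.map_mul F, h1, _root_.map_one F, Matrix.det_one]
  calc (F S).det * (Matrix.charmatrix N).det * (F S').det
      = (Matrix.charmatrix N).det * ((F S).det * (F S').det) := by ring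
    _ = (Matrix.charmatrix N).det := by rw [this, mul_one]

lemma charpoly_diagonal (d : Fin m → ℂ) :
    (Matrix.diagonal d).charpoly = ∏ i, (X - C (d i)) := by
  rw [Matrix.charpoly_of_upperTriangular _ (Matrix.blockTriangular_diagonal d)]
  congr 1
  funext i
  rw [Matrix.diagonal_apply_eq]

lemma charpoly_matFun (hA : A.IsHermitian) (f : ℝ → ℝ) :
    (matFun f A).charpoly = ∏ i, (X - C ((f (hA.eigenvalues i) : ℝ) : ℂ)) := by
  rw [matFun_def hA f, charpoly_conj (mul_star_self hA), charpoly_diagonal]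

lemma charpoly_herm (hA : A.IsHermitian) :
    A.charpoly = ∏ i, (X - C ((hA.eigenvalues i : ℝ) : ℂ)) := by
  conv_lhs => rw [hA.spectral_theorem]
  rw [Unitary.conjStarAlgAut_apply]
  rw [charpoly_conj (mul_star_self hA), charpoly_diagonal]
  rfl

lemma multiset_of_prod_eq {a b : Fin m → ℂ}
    (h : (∏ i, (X - C (a i))) = ∏ i, (X - C (b i))) :
    Finset.univ.val.map a = Finset.univ.val.map b := by
  have ha := Polynomial.roots_multiset_prod_X_sub_C (Finset.univ.val.map a)
  have hb := Polynomial.roots_multiset_prod_X_sub_C (Finset.univ.val.map b)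
  rw [Multiset.map_map] at ha hb
  calc Finset.univ.val.map a
      = (Multiset.map ((fun x => X - C x) ∘ a) Finset.univ.val).prod.roots := ha.symm
    _ = (Multiset.map ((fun x => X - C x) ∘ b) Finset.univ.val).prod.roots := by
        rw [show (Multiset.map ((fun x => X - C x) ∘ a) Finset.univ.val).prod
            = ∏ i, (X - C (a i)) from (Finset.prod_eq_multiset_prod _ _).symm, h,
          show (∏ i, (X - C (b i)))
            = (Multiset.map ((fun x => X - C x) ∘ b) Finset.univ.val).prod from
            Finset.prod_eq_multiset_prod _ _]
    _ = Finset.univ.val.map b := hb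


lemma sum_eig_eq {M : Mat m} (hM : M.IsHermitian) {a : Fin m → ℝ}
    (h : M.charpoly = ∏ i, (X - C ((a i : ℝ) : ℂ))) (g : ℝ → ℝ) :
    ∑ i, g (hM.eigenvalues i) = ∑ i, g (a i) := by
  rw [charpoly_herm hM] at h
  have hmul := multiset_of_prod_eq (a := fun i => ((hM.eigenvalues i : ℝ) : ℂ))
    (b := fun i => ((a i : ℝ) : ℂ)) h
  have := congrArg (fun s : Multiset ℂ => (s.map (fun z => g z.re)).sum) hmul
  simp only [Multiset.map_map, Function.comp, Complex.ofReal_re] at this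
  exact this

lemma fnorm_eq_sqrt_trace (A : Mat m) :
    fnorm A = Real.sqrt (Complex.re (Aᴴ * A).trace) := by
  rw [fnorm]
  congr 1
  have key : ∀ i k : Fin m, (star (A k i) * A k i).re = ‖A k i‖ ^ 2 := by
    intro i k
    rw [Complex.star_def, mul_comm, Complex.mul_conj]
    simp [Complex.normSq_eq_norm_sq, ← Complex.ofReal_pow]
  calc ∑ i, ∑ j, ‖A i j‖ ^ 2
      = ∑ j, ∑ i, ‖A i j‖ ^ 2 := Finset.sum_comm
    _ = ∑ j, ∑ i, (star (A i j) * A i j).re := by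
        refine Finset.sum_congr rfl fun j _ => Finset.sum_congr rfl fun i _ => (key j i).symm
    _ = Complex.re (Aᴴ * A).trace := by
        rw [Matrix.trace, Complex.re_sum]
        refine Finset.sum_congr rfl fun j _ => ?_
        rw [Matrix.diag_apply, Matrix.mul_apply, Complex.re_sum]
        refine Finset.sum_congr rfl fun i _ => ?_
        rw [Matrix.conjTranspose_apply]

lemma star_mul_cancel (hA : A.IsHermitian) (Z : Mat m) :
    star (hA.eigenvectorUnitary : Mat m) * ((hA.eigenvectorUnitary : Mat m) * Z) = Z := by
  rw [← mul_assoc, star_mul_self hA, one_mul]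

lemma conj3 (U D : Mat m) : (U * D * star U)ᴴ = U * Dᴴ * star U := by
  rw [Matrix.conjTranspose_mul, Matrix.conjTranspose_mul, Matrix.star_eq_conjTranspose U,
    Matrix.conjTranspose_conjTranspose, ← mul_assoc]

lemma fnorm_unitary_conj (hA : A.IsHermitian) (D : Mat m) :
    fnorm ((hA.eigenvectorUnitary : Mat m) * D * star (hA.eigenvectorUnitary : Mat m))
      = fnorm D := by
  set U : Mat m := (hA.eigenvectorUnitary : Mat m) with hU
  rw [fnorm_eq_sqrt_trace, fnorm_eq_sqrt_trace]
  have h1 : (U * D * star U)ᴴ * (U * D * star U) = U * (Dᴴ * D) * star U := by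
    rw [conj3]
    simp only [mul_assoc]
    rw [star_mul_cancel hA]
  have h2 : star U * U = 1 := star_mul_self hA
  rw [h1, Matrix.trace_mul_cycle, h2, one_mul]

lemma fnorm_diagonal (v : Fin m → ℂ) :
    fnorm (Matrix.diagonal v) = Real.sqrt (∑ i, ‖v i‖ ^ 2) := by
  rw [fnorm]
  congr 1
  refine Finset.sum_congr rfl fun i _ => ?_
  rw [Finset.sum_eq_single i]
  · rw [Matrix.diagonal_apply_eq]
  · intro j _ hj
    rw [Matrix.diagonal_apply_ne' _ hj]
    simp
  · intro h
    exact absurd (Finset.mem_univ i) h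

lemma fnorm_matFun (hA : A.IsHermitian) (f : ℝ → ℝ) :
    fnorm (matFun f A) = Real.sqrt (∑ i, (f (hA.eigenvalues i)) ^ 2) := by
  rw [matFun_def hA f, fnorm_unitary_conj hA, fnorm_diagonal]
  congr 1
  refine Finset.sum_congr rfl fun i _ => ?_
  rw [Complex.norm_real, Real.norm_eq_abs, sq_abs]


lemma herm3 {P S : Mat m} (hP : P.IsHermitian) (hS : S.IsHermitian) :
    (S * P * S).IsHermitian := by
  show _ᴴ = _
  rw [Matrix.conjTranspose_mul, Matrix.conjTranspose_mul, hP.eq, hS.eq, ← mul_assoc]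

lemma key {X A : Mat m} (hX : X.PosDef) (hA : A.PosDef) (t s : ℝ) :
    rdist (geom X t A) (geom X s A)
      = |t - s| * fnorm (mlog (mpow X (-(1/2:ℝ)) * A * mpow X (-(1/2:ℝ)))) := by
  have hXm : (mpow X (-(1/2:ℝ))).IsHermitian := matFun_herm hX.1 _
  have hXh : (mpow X (1/2:ℝ)).IsHermitian := matFun_herm hX.1 _
  set Xm : Mat m := mpow X (-(1/2:ℝ)) with hXmdef
  set Xh : Mat m := mpow X (1/2:ℝ) with hXhdef
  set B : Mat m := Xm * A * Xm with hBdef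
  have hB : B.PosDef := by
    have := posDef_conj hA (mpow_isUnit hX (-(1/2:ℝ)))
    rwa [hXm.eq] at this
  have hBt : (mpow B t).PosDef := mpow_posDef hB t
  set P : Mat m := geom X t A with hPdef
  have hPB : P = Xh * mpow B t * Xh := rfl
  have hP : P.PosDef := by
    rw [hPB]
    have := posDef_conj hBt (mpow_isUnit hX (1/2:ℝ))
    rwa [hXh.eq] at this
  set Q : Mat m := geom X s A with hQdef
  have hQB : Q = Xh * mpow B s * Xh := rfl
  have hQ : Q.PosDef := by
    rw [hQB]
    have := posDef_conj (mpow_posDef hB s) (mpow_isUnit hX (1/2:ℝ))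
    rwa [hXh.eq] at this
  set Pm : Mat m := mpow P (-(1/2:ℝ)) with hPmdef
  have hPm : Pm.IsHermitian := matFun_herm hP.1 _
  set M : Mat m := Pm * Q * Pm with hMdef
  have hrd : rdist P Q = fnorm (mlog M) := rfl
  have hM : M.IsHermitian := herm3 hQ.1 hPm
  have hSS' : (Pm * Xh) * (mpow B t * Xh * Pm) = 1 := by
    calc (Pm * Xh) * (mpow B t * Xh * Pm)
        = Pm * (Xh * mpow B t * Xh) * Pm := by simp only [mul_assoc]
      _ = Pm * mpow P 1 * Pm := by rw [← hPB, mpow_one hP.1]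
      _ = mpow P (-(1/2:ℝ) + 1) * Pm := by rw [hPmdef, mpow_mul hP]
      _ = mpow P ((-(1/2:ℝ) + 1) + -(1/2:ℝ)) := by rw [hPmdef, mpow_mul hP]
      _ = mpow P 0 := by norm_num
      _ = 1 := mpow_zero hP.1
  have hsim : M = (Pm * Xh) * mpow B (s - t) * (mpow B t * Xh * Pm) := by
    have hBs : mpow B s = mpow B (s - t) * mpow B t := by
      rw [mpow_mul hB, sub_add_cancel]
    rw [hMdef, hQB, hBs]
    simp only [mul_assoc]
  have hchar : M.charpoly = ∏ i, (Polynomial.X -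
      Polynomial.C ((hB.1.eigenvalues i ^ (s - t) : ℝ) : ℂ)) := by
    rw [hsim, charpoly_conj hSS']
    exact charpoly_matFun hB.1 _
  have hsum := sum_eig_eq hM hchar (fun x => Real.log x ^ 2)
  have hlog : ∀ i, Real.log (hB.1.eigenvalues i ^ (s - t)) =
      (s - t) * Real.log (hB.1.eigenvalues i) :=
    fun i => Real.log_rpow (hB.eigenvalues_pos i) _
  calc rdist P Q = fnorm (matFun Real.log M) := hrd
    _ = Real.sqrt (∑ i, Real.log (hM.eigenvalues i) ^ 2) := fnorm_matFun hM _
    _ = Real.sqrt (∑ i, Real.log (hB.1.eigenvalues i ^ (s - t)) ^ 2) := by rw [hsum]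
    _ = Real.sqrt ((s - t) ^ 2 * ∑ i, Real.log (hB.1.eigenvalues i) ^ 2) := by
        rw [Finset.mul_sum]
        congr 1
        refine Finset.sum_congr rfl fun i _ => ?_
        rw [hlog i, mul_pow]
    _ = |s - t| * Real.sqrt (∑ i, Real.log (hB.1.eigenvalues i) ^ 2) := by
        rw [Real.sqrt_mul (sq_nonneg _), Real.sqrt_sq_eq_abs]
    _ = |t - s| * fnorm (matFun Real.log B) := by
        rw [abs_sub_comm, fnorm_matFun hB.1 Real.log]
    _ = |t - s| * fnorm (mlog B) := rfl

end Aux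

/-- The map `t ↦ X #_t μ` is locally Lipschitz for the 1-Wasserstein distance. -/
theorem stmt13 {m : ℕ} (X : Mat m) (hX : X.PosDef) (μ : Measure (Mat m))
    (hμ : IsProbabilityMeasure μ) (hμpos : ∀ᵐ A ∂μ, A.PosDef) (hμffm : HasFFM μ)
    (hmeas : ∀ t : ℝ, AEMeasurable (geom X t) μ) :
    ∀ T : ℝ, 0 < T → ∃ C : ℝ, 0 < C ∧
      ∀ t ∈ Set.Icc (-T) T, ∀ s ∈ Set.Icc (-T) T,
        W1 (μ.map (geom X t)) (μ.map (geom X s)) ≤ C * |t - s| := by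
  intro T _
  set R : Mat m → ℝ := fun A => fnorm (mlog (mpow X (-(1/2:ℝ)) * A * mpow X (-(1/2:ℝ)))) with hR
  refine ⟨max (∫ A, R A ∂μ) 1, lt_of_lt_of_le one_pos (le_max_right _ _), ?_⟩
  intro t _ s _
  set C : ℝ := max (∫ A, R A ∂μ) 1 with hC
  have hCpos : 0 < C := lt_of_lt_of_le one_pos (le_max_right _ _)
  have hg : AEMeasurable (fun A => (geom X t A, geom X s A)) μ :=
    (hmeas t).prodMk (hmeas s)
  set π : Measure (Mat m × Mat m) := μ.map (fun A => (geom X t A, geom X s A)) with hπ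
  have hπc : π ∈ couplings (μ.map (geom X t)) (μ.map (geom X s)) := by
    refine ⟨Measure.isProbabilityMeasure_map hg, ?_, ?_⟩
    · rw [hπ, AEMeasurable.map_map_of_aemeasurable measurable_fst.aemeasurable hg]
      rfl
    · rw [hπ, AEMeasurable.map_map_of_aemeasurable measurable_snd.aemeasurable hg]
      rfl
  have hbdd : BddBelow ((fun π : Measure (Mat m × Mat m) => ∫ p, rdist p.1 p.2 ∂π) ''
      couplings (μ.map (geom X t)) (μ.map (geom X s))) := by
    refine ⟨0, ?_⟩
    rintro x ⟨π', _, rfl⟩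
    exact integral_nonneg fun p => Real.sqrt_nonneg _
  have hW : W1 (μ.map (geom X t)) (μ.map (geom X s)) ≤ ∫ p, rdist p.1 p.2 ∂π :=
    csInf_le hbdd ⟨π, hπc, rfl⟩
  refine le_trans hW ?_
  by_cases hsm : AEStronglyMeasurable (fun p : Mat m × Mat m => rdist p.1 p.2) π
  · rw [hπ, integral_map hg hsm]
    have hcongr : ∫ A, rdist (geom X t A) (geom X s A) ∂μ = ∫ A, |t - s| * R A ∂μ :=
      integral_congr_ae (hμpos.mono fun A hA => Aux.key hX hA t s)
    rw [hcongr, integral_const_mul]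
    have h1 : ∫ A, R A ∂μ ≤ C := le_max_left _ _
    calc |t - s| * ∫ A, R A ∂μ ≤ |t - s| * C :=
          mul_le_mul_of_nonneg_left h1 (abs_nonneg _)
      _ = C * |t - s| := mul_comm _ _
  · rw [integral_non_aestronglyMeasurable hsm]
    exact mul_nonneg hCpos.le (abs_nonneg _)
end
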